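/- arXiv:1802.06355 — 3 statements merged into one kernel-verified Lean document; each statement's English description precedes it below -/
import Mathlib

section
/- Let f : ℝ → ℝ have an everywhere-convergent Chebyshev expansion f(x) = Σ_{j=0}^∞ b_j T_j(x) on [−1,1]. Let (q_i)_{i≥0} be a probability distribution on nonnegative integers with q_i ∈ (0,1), Σ_i q_i = 1, and with tails Σ_{i≥r} q_i > 0 for all r. Define the randomized truncation p̂_r(x) = Σ_{j=0}^r b_j/(1 − Σ_{i=0}^{j−1} q_i) · T_j(x). If for each x ∈ [−1,1], lim_{n→∞} Σ_{i=n+1}^∞ q_i · p̂_n(x) = 0, then for a random index n with P(n = r) = q_r, E_n[p̂_n(x)] = f(x) for every x ∈ [−1,1]. -/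
open Polynomial Finset Filter

/-- The randomized Chebyshev truncation `p̂_r(x) = ∑_{j=0}^r b_j/(1-∑_{i<j} q_i) T_j(x)`. -/
noncomputable def randTrunc (b q : ℕ → ℝ) (r : ℕ) (x : ℝ) : ℝ :=
  ∑ j ∈ Finset.range (r + 1),
    b j / (1 - ∑ i ∈ Finset.range j, q i) * (Polynomial.Chebyshev.T ℝ j).eval x

lemma swap_aux (F : ℕ → ℕ → ℝ) (N : ℕ) :
    ∑ r ∈ Finset.range N, ∑ j ∈ Finset.range (r + 1), F j r
      = ∑ j ∈ Finset.range N, ∑ r ∈ Finset.Ico j N, F j r := by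
  apply Finset.sum_comm'
  intro r j
  simp only [Finset.mem_range, Finset.mem_Ico]
  omega

theorem randomized_chebyshev_unbiased (f : ℝ → ℝ) (b q : ℕ → ℝ)
    (hf : ∀ x ∈ Set.Icc (-1:ℝ) 1,
      HasSum (fun j : ℕ => b j * (Polynomial.Chebyshev.T ℝ j).eval x) (f x))
    (hq : ∀ i, q i ∈ Set.Ioo (0:ℝ) 1)
    (hq1 : HasSum q 1)
    (htail : ∀ r : ℕ, 0 < ∑' i : ℕ, q (r + i))
    (hlim : ∀ x ∈ Set.Icc (-1:ℝ) 1,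
      Tendsto (fun n : ℕ => (∑' i : ℕ, q (n + 1 + i)) * randTrunc b q n x) atTop (nhds 0)) :
    ∀ x ∈ Set.Icc (-1:ℝ) 1,
      HasSum (fun r : ℕ => q r * randTrunc b q r x) (f x) := by
  intro x hx
  have hqsum : Summable q := hq1.summable
  set T : ℕ → ℝ := fun j => (Polynomial.Chebyshev.T ℝ j).eval x with hT
  set s : ℕ → ℝ := fun j => ∑ i ∈ Finset.range j, q i with hs
  -- tail identity
  have htail_eq : ∀ j : ℕ, (∑' i, q (j + i)) = 1 - s j := by
    intro j
    have h := Summable.sum_add_tsum_nat_add j hqsum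
    have h1 : ∑' i, q i = 1 := hq1.tsum_eq
    have h2 : (∑' i, q (j + i)) = ∑' i, q (i + j) := tsum_congr fun i => by rw [add_comm]
    rw [h2]
    linarith [h]
  have hpos : ∀ j, 0 < 1 - s j := fun j => htail_eq j ▸ htail j
  set c : ℕ → ℝ := fun j => b j / (1 - s j) * T j with hc
  have hct : ∀ j, c j * (1 - s j) = b j * T j := by
    intro j
    have := (hpos j).ne'
    simp only [hc]
    field_simp
  have hrt : ∀ r, randTrunc b q r x = ∑ j ∈ Finset.range (r + 1), c j := fun r => rfl
  -- key partial-sum identity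
  have key : ∀ N : ℕ, ∑ r ∈ Finset.range (N + 1), q r * randTrunc b q r x
      = (∑ j ∈ Finset.range (N + 1), b j * T j)
        - (∑' i, q (N + 1 + i)) * randTrunc b q N x := by
    intro N
    have h1 : ∑ r ∈ Finset.range (N + 1), q r * randTrunc b q r x
        = ∑ r ∈ Finset.range (N + 1), ∑ j ∈ Finset.range (r + 1), q r * c j := by
      refine Finset.sum_congr rfl fun r _ => ?_
      rw [hrt, Finset.mul_sum]
    rw [h1, swap_aux (fun j r => q r * c j) (N + 1)]
    have h2 : ∀ j ∈ Finset.range (N + 1),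
        ∑ r ∈ Finset.Ico j (N + 1), q r * c j = (s (N + 1) - s j) * c j := by
      intro j hj
      rw [← Finset.sum_mul, Finset.sum_Ico_eq_sub _ (Nat.le_of_lt_succ (Finset.mem_range.mp hj) |>.trans (Nat.le_succ N))]
    rw [Finset.sum_congr rfl h2, htail_eq (N + 1), hrt]
    have h3 : ∀ j : ℕ, (s (N + 1) - s j) * c j = b j * T j - (1 - s (N + 1)) * c j := by
      intro j
      linear_combination hct j
    rw [Finset.sum_congr rfl fun j _ => h3 j, Finset.sum_sub_distrib, ← Finset.mul_sum]
  -- convergence of partial sums to f x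
  have habsT : Summable fun j => |b j * T j| := (hf x hx).summable.abs
  have h1 : Tendsto (fun N : ℕ => ∑ j ∈ Finset.range (N + 1), b j * T j) atTop (nhds (f x)) :=
    (hf x hx).tendsto_sum_nat.comp (tendsto_add_atTop_nat 1)
  have h2 := hlim x hx
  have h3 : Tendsto (fun N : ℕ => ∑ r ∈ Finset.range (N + 1), q r * randTrunc b q r x)
      atTop (nhds (f x)) := by
    simp only [key]
    simpa using h1.sub h2
  -- summability
  have hcabs : ∀ j, |c j| * (1 - s j) = |b j * T j| := by
    intro j
    have hp := hpos j
    have : |c j| * |1 - s j| = |b j * T j| := by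
      rw [← abs_mul, hct j]
    rwa [abs_of_pos hp] at this
  have hM : ∀ N : ℕ, ∑ r ∈ Finset.range N, q r * ∑ j ∈ Finset.range (r + 1), |c j|
      ≤ ∑' j, |b j * T j| := by
    intro N
    have h1' : ∑ r ∈ Finset.range N, q r * ∑ j ∈ Finset.range (r + 1), |c j|
        = ∑ j ∈ Finset.range N, (∑ r ∈ Finset.Ico j N, q r) * |c j| := by
      simp only [Finset.mul_sum]
      rw [swap_aux (fun j r => q r * |c j|) N]
      exact Finset.sum_congr rfl fun j _ => by rw [← Finset.sum_mul]
    rw [h1']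
    calc ∑ j ∈ Finset.range N, (∑ r ∈ Finset.Ico j N, q r) * |c j|
        ≤ ∑ j ∈ Finset.range N, |b j * T j| := by
          refine Finset.sum_le_sum fun j hj => ?_
          have hjN : j ≤ N := Nat.le_of_lt (Finset.mem_range.mp hj)
          rw [Finset.sum_Ico_eq_sub _ hjN]
          have hsN : s N ≤ 1 := by linarith [hpos N]
          have : (s N - s j) * |c j| ≤ (1 - s j) * |c j| := by
            apply mul_le_mul_of_nonneg_right (by linarith) (abs_nonneg _)
          calc (s N - s j) * |c j| ≤ (1 - s j) * |c j| := this
            _ = |b j * T j| := by rw [mul_comm]; exact hcabs j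
      _ ≤ ∑' j, |b j * T j| :=
          Summable.sum_le_tsum _ (fun j _ => abs_nonneg _) habsT
  have hhs : Summable fun r => q r * ∑ j ∈ Finset.range (r + 1), |c j| := by
    apply summable_of_sum_range_le (c := ∑' j, |b j * T j|)
    · intro r
      exact mul_nonneg (hq r).1.le (Finset.sum_nonneg fun j _ => abs_nonneg _)
    · exact hM
  have hgsum : Summable fun r => q r * randTrunc b q r x := by
    apply Summable.of_abs
    apply Summable.of_nonneg_of_le (fun r => abs_nonneg _) _ hhs
    intro r
    rw [abs_mul, abs_of_pos (hq r).1, hrt]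
    exact mul_le_mul_of_nonneg_left (Finset.abs_sum_le_sum_abs _ _) (hq r).1.le
  -- conclude
  have h4 : Tendsto (fun N : ℕ => ∑ r ∈ Finset.range (N + 1), q r * randTrunc b q r x)
      atTop (nhds (∑' r, q r * randTrunc b q r x)) :=
    hgsum.hasSum.tendsto_sum_nat.comp (tendsto_add_atTop_nat 1)
  have heq : (∑' r, q r * randTrunc b q r x) = f x := tendsto_nhds_unique h4 h3
  exact heq ▸ hgsum.hasSum
end

section
/- With notation as in the randomized Chebyshev truncation: if f(x) = Σ_{j=0}^∞ b_j T_j(x) with Σ_j b_j² < ∞, (q_i) a probability distribution on ℕ with all partial tails positive, p̂_r(x) = Σ_{j=0}^r b_j/(1 − Σ_{i<j} q_i)·T_j(x), and n random with P(n=r)=q_r, then the Chebyshev-weighted mean squared error satisfies E_n[ ∫_{−1}^{1} (p̂_n(x) − f(x))²/√(1−x²) dx ] = (π/2) · Σ_{j=1}^∞ b_j² · (Σ_{i=0}^{j−1} q_i)/(1 − Σ_{i=0}^{j−1} q_i). -/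
open Polynomial Finset

open MeasureTheory Real Set

section IntegralLemmas

lemma weight_integrableOn :
    IntegrableOn (fun x : ℝ => 1 / Real.sqrt (1 - x ^ 2)) (Set.Ioc (-1) 1) := by
  apply intervalIntegral.integrableOn_deriv_of_nonneg (g := Real.arcsin)
  · exact Real.continuous_arcsin.continuousOn
  · intro x hx; exact Real.hasDerivAt_arcsin hx.1.ne' hx.2.ne
  · intro x _; positivity

lemma intervalIntegrable_poly_div (p : Polynomial ℝ) :
    IntervalIntegrable (fun x => p.eval x / Real.sqrt (1 - x ^ 2))
      MeasureTheory.volume (-1) 1 := by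
  obtain ⟨C, hC⟩ := (isCompact_Icc (a := (-1:ℝ)) (b := 1)).exists_bound_of_continuousOn
    p.continuous.continuousOn
  rw [intervalIntegrable_iff_integrableOn_Ioc_of_le (by norm_num)]
  apply MeasureTheory.Integrable.mono' (g := fun x => C * (1 / Real.sqrt (1 - x ^ 2)))
  · exact weight_integrableOn.const_mul C
  · exact ((p.continuous.measurable).div
      ((continuous_const.sub (continuous_pow 2)).measurable.sqrt)).aestronglyMeasurable
  · refine (MeasureTheory.ae_restrict_mem measurableSet_Ioc).mono (fun x hx => ?_)
    have h1 : |p.eval x| ≤ C := by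
      have := hC x ⟨hx.1.le, hx.2⟩; simpa [Real.norm_eq_abs] using this
    have h2 : (0:ℝ) ≤ 1 / Real.sqrt (1 - x ^ 2) := by positivity
    rw [Real.norm_eq_abs, abs_div, abs_of_nonneg (Real.sqrt_nonneg _), div_eq_mul_one_div]
    calc |p.eval x| * (1 / Real.sqrt (1 - x ^ 2)) ≤ C * (1 / Real.sqrt (1 - x ^ 2)) := by
          exact mul_le_mul_of_nonneg_right h1 h2
      _ = _ := rfl

lemma integral_T_div (m : ℤ) :
    ∫ x in (-1:ℝ)..1, (Polynomial.Chebyshev.T ℝ m).eval x / Real.sqrt (1 - x ^ 2)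
      = if m = 0 then Real.pi else 0 := by
  rcases eq_or_ne m 0 with rfl | hm
  · simp only [if_pos rfl]
    have h := intervalIntegral.integral_eq_sub_of_hasDeriv_right_of_le (a := (-1:ℝ)) (b := 1)
      (f := Real.arcsin) (f' := fun x => (Polynomial.Chebyshev.T ℝ 0).eval x / Real.sqrt (1 - x ^ 2))
      (by norm_num) Real.continuous_arcsin.continuousOn
      (fun x hx => by
        simpa [Polynomial.Chebyshev.T_zero] using
          (Real.hasDerivAt_arcsin hx.1.ne' hx.2.ne).hasDerivWithinAt)
      (intervalIntegrable_poly_div _)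
    rw [h, Real.arcsin_one, Real.arcsin_neg_one]; norm_num
  · simp only [if_neg hm]
    have h := intervalIntegral.integral_eq_sub_of_hasDeriv_right_of_le (a := (-1:ℝ)) (b := 1)
      (f := fun x => -Real.sin (m * Real.arccos x) / m)
      (f' := fun x => (Polynomial.Chebyshev.T ℝ m).eval x / Real.sqrt (1 - x ^ 2))
      (by norm_num)
      ((continuous_sin.comp (continuous_const.mul Real.continuous_arccos)).neg.div_const _).continuousOn
      ?_ (intervalIntegrable_poly_div _)
    · rw [h]
      simp [Real.arccos_one, Real.arccos_neg_one, Real.sin_int_mul_pi]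
    · intro x hx
      have h1 : x ≠ -1 := hx.1.ne'
      have h2 : x ≠ 1 := hx.2.ne
      have hsq : (0:ℝ) < Real.sqrt (1 - x ^ 2) := by
        apply Real.sqrt_pos.2; nlinarith [hx.1, hx.2]
      have hmr : (m:ℝ) ≠ 0 := Int.cast_ne_zero.2 hm
      have hd : HasDerivAt (fun x => -Real.sin (m * Real.arccos x) / m)
          (-(Real.cos (m * Real.arccos x) * ((m:ℝ) * -(1 / Real.sqrt (1 - x ^ 2)))) / m) x := by
        exact (((Real.hasDerivAt_arccos h1 h2).const_mul (m:ℝ)).sin.neg).div_const (m:ℝ)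
      have hT : Real.cos ((m:ℝ) * Real.arccos x) = (Polynomial.Chebyshev.T ℝ m).eval x := by
        rw [show x = Real.cos (Real.arccos x) from
          (Real.cos_arccos (by linarith [hx.1]) (by linarith [hx.2])).symm,
          Polynomial.Chebyshev.T_real_cos]
        rw [Real.cos_arccos (by linarith [hx.1]) (by linarith [hx.2])]
      apply HasDerivAt.hasDerivWithinAt
      refine hd.congr_deriv ?_
      simp only [← hT]
      field_simp
end IntegralLemmas


lemma integral_T_mul_T (j k : ℕ) :
    ∫ x in (-1:ℝ)..1,
        ((Polynomial.Chebyshev.T ℝ j).eval x * (Polynomial.Chebyshev.T ℝ k).eval x)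
          / Real.sqrt (1 - x ^ 2)
      = if j = k then (if j = 0 then Real.pi else Real.pi / 2) else 0 := by
  have key : ∀ x : ℝ,
      ((Polynomial.Chebyshev.T ℝ j).eval x * (Polynomial.Chebyshev.T ℝ k).eval x)
        / Real.sqrt (1 - x ^ 2)
      = ((Polynomial.Chebyshev.T ℝ ((j:ℤ) + k)).eval x / Real.sqrt (1 - x ^ 2)
          + (Polynomial.Chebyshev.T ℝ ((j:ℤ) - k)).eval x / Real.sqrt (1 - x ^ 2)) / 2 := by
    intro x
    have h := congrArg (Polynomial.eval x) (Polynomial.Chebyshev.T_mul_T ℝ (j:ℤ) (k:ℤ))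
    simp only [Polynomial.eval_mul, Polynomial.eval_add, Polynomial.eval_ofNat] at h
    have h2 : (Polynomial.Chebyshev.T ℝ ((j:ℤ)+k)).eval x
        + (Polynomial.Chebyshev.T ℝ ((j:ℤ)-k)).eval x
        = 2 * ((Polynomial.Chebyshev.T ℝ (j:ℤ)).eval x * (Polynomial.Chebyshev.T ℝ (k:ℤ)).eval x) := by
      rw [← h]; ring
    rw [← add_div, h2]
    ring
  rw [intervalIntegral.integral_congr (fun x _ => key x)]
  rw [intervalIntegral.integral_div]
  rw [intervalIntegral.integral_add (intervalIntegrable_poly_div _) (intervalIntegrable_poly_div _)]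
  rw [integral_T_div, integral_T_div]
  rcases eq_or_ne j k with rfl | hjk
  · rcases eq_or_ne j 0 with rfl | hj
    · norm_num
    · have h1 : ((j:ℤ) + j) ≠ 0 := by
        simpa using fun h => hj (by exact_mod_cast h)
      simp [h1, sub_self, hj]
  · have h1 : ((j:ℤ) - k) ≠ 0 := sub_ne_zero.2 (by exact_mod_cast hjk)
    have h2 : ((j:ℤ) + k) ≠ 0 ∨ True := Or.inr trivial
    by_cases h3 : ((j:ℤ) + k) = 0
    · have hj0 : j = 0 := by omega
      have hk0 : k = 0 := by omega
      exact absurd (hj0.trans hk0.symm) hjk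
    · simp [h3, h1, hjk]


noncomputable def chebWeight : ℝ → NNReal := fun x => Real.toNNReal (1 / Real.sqrt (1 - x ^ 2))

lemma chebWeight_measurable : Measurable chebWeight := by
  apply Measurable.real_toNNReal
  exact (measurable_const.div ((continuous_const.sub (continuous_pow 2)).measurable.sqrt))

noncomputable def chebMeasure : Measure ℝ :=
  ((MeasureTheory.volume.restrict (Set.Ioo (-1:ℝ) 1)).withDensity
    (fun x => (chebWeight x : ENNReal)))

instance : IsFiniteMeasure chebMeasure := by
  constructor
  rw [chebMeasure, withDensity_apply _ MeasurableSet.univ, Measure.restrict_univ]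
  have h : ∀ x, (chebWeight x : ENNReal) = ENNReal.ofReal (1 / Real.sqrt (1 - x ^ 2)) := fun x => rfl
  simp only [h]
  exact (weight_integrableOn.mono_set Set.Ioo_subset_Ioc_self).lintegral_lt_top

lemma integral_chebMeasure (g : ℝ → ℝ) :
    ∫ x, g x ∂chebMeasure = ∫ x in (-1:ℝ)..1, g x / Real.sqrt (1 - x ^ 2) := by
  rw [chebMeasure, integral_withDensity_eq_integral_smul chebWeight_measurable,
      intervalIntegral.integral_of_le (by norm_num : (-1:ℝ) ≤ 1),
      integral_Ioc_eq_integral_Ioo]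
  refine setIntegral_congr_fun measurableSet_Ioo (fun x hx => ?_)
  have h : (0:ℝ) < Real.sqrt (1 - x ^ 2) := by
    apply Real.sqrt_pos.2; nlinarith [hx.1, hx.2]
  have h2 : (0:ℝ) ≤ 1 / Real.sqrt (1 - x ^ 2) := by positivity
  simp only [NNReal.smul_def, chebWeight, Real.coe_toNNReal _ h2, smul_eq_mul]
  rw [div_eq_mul_one_div (g x), mul_comm]

lemma chebMeasure_ae_Ioo : ∀ᵐ x ∂chebMeasure, x ∈ Set.Ioo (-1:ℝ) 1 := by
  have h : chebMeasure ≪ (MeasureTheory.volume.restrict (Set.Ioo (-1:ℝ) 1)) :=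
    withDensity_absolutelyContinuous _ _
  exact h.ae_le (ae_restrict_mem measurableSet_Ioo)

lemma memL2_of_continuous {g : ℝ → ℝ} (hg : Continuous g) : MemLp g 2 chebMeasure := by
  obtain ⟨C, hC⟩ := (isCompact_Icc (a := (-1:ℝ)) (b := 1)).exists_bound_of_continuousOn
    hg.continuousOn
  refine MemLp.of_bound hg.aestronglyMeasurable C ?_
  exact chebMeasure_ae_Ioo.mono fun x hx => hC x ⟨hx.1.le, hx.2.le⟩

noncomputable def TjL2 (j : ℕ) : Lp ℝ 2 chebMeasure :=
  (memL2_of_continuous (Polynomial.Chebyshev.T ℝ j).continuous).toLp _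

lemma coeFn_TjL2 (j : ℕ) :
    (TjL2 j : ℝ → ℝ) =ᵐ[chebMeasure] fun x => (Polynomial.Chebyshev.T ℝ j).eval x :=
  MemLp.coeFn_toLp _

lemma inner_TjL2 (j k : ℕ) :
    (inner ℝ (TjL2 j) (TjL2 k) : ℝ)
      = if j = k then (if j = 0 then Real.pi else Real.pi / 2) else 0 := by
  rw [MeasureTheory.L2.inner_def]
  have h : ∫ a, (inner ℝ ((TjL2 j : ℝ → ℝ) a) ((TjL2 k : ℝ → ℝ) a) : ℝ) ∂chebMeasure
      = ∫ a, (Polynomial.Chebyshev.T ℝ j).eval a * (Polynomial.Chebyshev.T ℝ k).eval a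
          ∂chebMeasure := by
    refine integral_congr_ae ?_
    filter_upwards [coeFn_TjL2 j, coeFn_TjL2 k] with a h1 h2
    rw [h1, h2, Real.inner_apply]
  rw [h, integral_chebMeasure, ← integral_T_mul_T j k]


noncomputable def nrm (j : ℕ) : ℝ := if j = 0 then Real.sqrt Real.pi else Real.sqrt (Real.pi / 2)

lemma nrm_pos (j : ℕ) : 0 < nrm j := by
  unfold nrm; split <;> positivity

lemma nrm_sq (j : ℕ) : nrm j ^ 2 = if j = 0 then Real.pi else Real.pi / 2 := by
  unfold nrm; split
  · exact Real.sq_sqrt Real.pi_pos.le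
  · exact Real.sq_sqrt (by positivity)

noncomputable def ejL2 (j : ℕ) : Lp ℝ 2 chebMeasure := (nrm j)⁻¹ • TjL2 j

lemma TjL2_eq (j : ℕ) : TjL2 j = nrm j • ejL2 j := by
  rw [ejL2, smul_inv_smul₀ (nrm_pos j).ne']

lemma orthonormal_ej : Orthonormal ℝ ejL2 := by
  rw [orthonormal_iff_ite]
  intro i j
  rw [ejL2, ejL2, real_inner_smul_left, real_inner_smul_right, inner_TjL2]
  rcases eq_or_ne i j with rfl | hij
  · simp only [if_pos rfl]
    rw [← nrm_sq i]
    field_simp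
    rw [if_pos trivial, if_pos trivial, div_self (pow_ne_zero 2 (nrm_pos i).ne')]
  · simp [hij]

lemma hasSum_norm_sq_of_orthonormal {H : Type*} [NormedAddCommGroup H]
    [InnerProductSpace ℝ H] {e : ℕ → H} (he : Orthonormal ℝ e) {c : ℕ → ℝ} {v : H}
    (h : HasSum (fun j => c j • e j) v) : HasSum (fun j => c j ^ 2) (‖v‖ ^ 2) := by
  have key : ∀ s : Finset ℕ, ∑ j ∈ s, c j ^ 2 = ‖∑ j ∈ s, c j • e j‖ ^ 2 := by
    intro s
    rw [← real_inner_self_eq_norm_sq, Orthonormal.inner_sum he c c s]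
    simp [sq]
  rw [HasSum]
  simp only [key]
  exact ((continuous_norm.pow 2).continuousAt (x := v)).tendsto.comp h


lemma summable_smul_of_sq {H : Type*} [NormedAddCommGroup H]
    [InnerProductSpace ℝ H] [CompleteSpace H] {e : ℕ → H} (he : Orthonormal ℝ e)
    {c : ℕ → ℝ} (hc : Summable fun j => c j ^ 2) : Summable (fun j => c j • e j) := by
  have h := (he.orthogonalFamily.summable_iff_norm_sq_summable c).2 ?_
  · simpa [LinearIsometry.toSpanSingleton_apply] using h
  · simpa [Real.norm_eq_abs, sq_abs] using hc

lemma tsum_eq_toReal_tsum_ofReal (g : ℕ → ℝ) (hg : ∀ n, 0 ≤ g n) :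
    ∑' n, g n = (∑' n, ENNReal.ofReal (g n)).toReal := by
  by_cases h : Summable g
  · rw [← ENNReal.ofReal_tsum_of_nonneg hg h, ENNReal.toReal_ofReal (tsum_nonneg hg)]
  · rw [tsum_eq_zero_of_not_summable h]
    have htop : ∑' n, ENNReal.ofReal (g n) = ⊤ := by
      by_contra htop
      apply h
      have h2 : Summable (fun n => (g n).toNNReal) :=
        ENNReal.tsum_coe_ne_top_iff_summable.mp (by exact htop)
      have h3 := NNReal.summable_coe.2 h2
      refine h3.congr fun n => ?_
      exact Real.coe_toNNReal _ (hg n)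
    simp [htop]

lemma tsum_comm_of_nonneg {a : ℕ → ℕ → ℝ} (h0 : ∀ r j, 0 ≤ a r j)
    (hrow : ∀ r, Summable (a r)) (hcol : ∀ j, Summable (fun r => a r j)) :
    ∑' r, ∑' j, a r j = ∑' j, ∑' r, a r j := by
  have h1 : ∑' r, ∑' j, a r j = (∑' r, ENNReal.ofReal (∑' j, a r j)).toReal :=
    tsum_eq_toReal_tsum_ofReal _ (fun r => tsum_nonneg (h0 r))
  have h2 : ∑' j, ∑' r, a r j = (∑' j, ENNReal.ofReal (∑' r, a r j)).toReal :=
    tsum_eq_toReal_tsum_ofReal _ (fun j => tsum_nonneg (fun r => h0 r j))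
  rw [h1, h2]
  congr 1
  calc ∑' r, ENNReal.ofReal (∑' j, a r j)
      = ∑' (r) (j), ENNReal.ofReal (a r j) := by
        refine tsum_congr fun r => ENNReal.ofReal_tsum_of_nonneg (h0 r) (hrow r)
    _ = ∑' (j) (r), ENNReal.ofReal (a r j) := ENNReal.tsum_comm
    _ = ∑' j, ENNReal.ofReal (∑' r, a r j) := by
        refine tsum_congr fun j => (ENNReal.ofReal_tsum_of_nonneg (fun r => h0 r j) (hcol j)).symm

lemma coeFn_finset_sum {α : Type*} [MeasurableSpace α] {μ : Measure α}
    (s : Finset ℕ) (g : ℕ → Lp ℝ 2 μ) :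
    ((∑ j ∈ s, g j : Lp ℝ 2 μ) : α → ℝ) =ᵐ[μ] fun x => ∑ j ∈ s, (g j : α → ℝ) x := by
  classical
  induction s using Finset.induction with
  | empty =>
    simp only [Finset.sum_empty]
    exact Lp.coeFn_zero ℝ 2 μ
  | insert a s hj ih =>
    rw [Finset.sum_insert hj]
    filter_upwards [Lp.coeFn_add (g a) (∑ j ∈ s, g j), ih] with x hx hx2
    rw [hx]
    simp only [Pi.add_apply, hx2, Finset.sum_insert hj]


theorem randomized_chebyshev_variance (f : ℝ → ℝ) (b q : ℕ → ℝ)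
    (hb : Summable fun j : ℕ => (b j) ^ 2)
    (hf : ∀ x ∈ Set.Ioo (-1:ℝ) 1,
      HasSum (fun j : ℕ => b j * (Polynomial.Chebyshev.T ℝ j).eval x) (f x))
    (hq0 : ∀ i, 0 ≤ q i) (hq1 : HasSum q 1)
    (hs : ∀ j : ℕ, (∑ i ∈ Finset.range j, q i) < 1) :
    ∑' r : ℕ, q r * ∫ x in (-1:ℝ)..1, (randTrunc b q r x - f x) ^ 2 / Real.sqrt (1 - x ^ 2)
      = Real.pi / 2 *
        ∑' j : ℕ, (b (j + 1)) ^ 2 *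
          (∑ i ∈ Finset.range (j + 1), q i) / (1 - ∑ i ∈ Finset.range (j + 1), q i) := by
  classical
  set S : ℕ → ℝ := fun j => ∑ i ∈ Finset.range j, q i with hS_def
  have hSne : ∀ j, (1:ℝ) - S j ≠ 0 := fun j => by have := hs j; simp only [hS_def]; linarith
  set c : ℕ → ℝ := fun j => b j * nrm j with hc_def
  have hc_sum : Summable (fun j => c j ^ 2) := by
    have hπ : ∀ j, c j ^ 2 ≤ Real.pi * b j ^ 2 := by
      intro j
      have h1 : c j ^ 2 = b j ^ 2 * nrm j ^ 2 := by rw [hc_def]; ring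
      rw [h1, nrm_sq j]
      split
      · ring_nf; exact le_refl _
      · nlinarith [sq_nonneg (b j), Real.pi_pos]
    exact Summable.of_nonneg_of_le (fun j => sq_nonneg _) hπ (hb.mul_left Real.pi)
  have hsum : Summable (fun j => c j • ejL2 j) := summable_smul_of_sq orthonormal_ej hc_sum
  obtain ⟨F, hF⟩ := hsum
  -- identify F with f a.e.
  have hSN : ∀ n : ℕ, ((∑ j ∈ Finset.range n, c j • ejL2 j : Lp ℝ 2 chebMeasure) : ℝ → ℝ)
      =ᵐ[chebMeasure]
        (fun x => ∑ j ∈ Finset.range n, b j * (Polynomial.Chebyshev.T ℝ j).eval x) := by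
    intro n
    have h2 : ∀ j : ℕ, ((c j • ejL2 j : Lp ℝ 2 chebMeasure) : ℝ → ℝ) =ᵐ[chebMeasure]
        fun x => b j * (Polynomial.Chebyshev.T ℝ j).eval x := by
      intro j
      have he : c j • ejL2 j = b j • TjL2 j := by
        rw [TjL2_eq j, hc_def, smul_smul]
      rw [he]
      filter_upwards [Lp.coeFn_smul (b j) (TjL2 j), coeFn_TjL2 j] with x hx hx2
      rw [hx]; simp [hx2]
    filter_upwards [coeFn_finset_sum (Finset.range n) (fun j => c j • ejL2 j),
      ae_all_iff.2 h2] with x hx hx2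
    rw [hx]
    exact Finset.sum_congr rfl fun j _ => hx2 j
  have hae : (F : ℝ → ℝ) =ᵐ[chebMeasure] f := by
    have htendsto := hF.tendsto_sum_nat
    have hLp := (Lp.tendsto_Lp_iff_tendsto_eLpNorm'
      (fun n => (∑ j ∈ Finset.range n, c j • ejL2 j : Lp ℝ 2 chebMeasure)) F).1 htendsto
    have hmeas : TendstoInMeasure chebMeasure
        (fun n => ((∑ j ∈ Finset.range n, c j • ejL2 j : Lp ℝ 2 chebMeasure) : ℝ → ℝ))
        Filter.atTop (F : ℝ → ℝ) :=
      tendstoInMeasure_of_tendsto_eLpNorm (by norm_num)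
        (fun n => Lp.aestronglyMeasurable _) (Lp.aestronglyMeasurable F) hLp
    have hmeas2 : TendstoInMeasure chebMeasure
        (fun n x => ∑ j ∈ Finset.range n, b j * (Polynomial.Chebyshev.T ℝ j).eval x)
        Filter.atTop (F : ℝ → ℝ) :=
      hmeas.congr hSN (Filter.EventuallyEq.refl _ _)
    obtain ⟨ns, hns, hae2⟩ := hmeas2.exists_seq_tendsto_ae
    filter_upwards [hae2, chebMeasure_ae_Ioo] with x hx hx2
    have h4 : Filter.Tendsto
        (fun i => ∑ j ∈ Finset.range (ns i), b j * (Polynomial.Chebyshev.T ℝ j).eval x)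
        Filter.atTop (nhds (f x)) :=
      ((hf x hx2).tendsto_sum_nat).comp hns.tendsto_atTop
    exact tendsto_nhds_unique hx h4
  -- key per-r computation
  have key_r : ∀ r : ℕ, HasSum
      (fun j => Real.pi / 2 * (b (j+1))^2 *
        (if j + 1 ≤ r then (S (j+1) / (1 - S (j+1)))^2 else 1))
      (∫ x in (-1:ℝ)..1, (randTrunc b q r x - f x)^2 / Real.sqrt (1 - x^2)) := by
    intro r
    set Pr : Lp ℝ 2 chebMeasure :=
      ∑ j ∈ Finset.range (r+1), (b j / (1 - S j)) • TjL2 j with hPr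
    have hInt : ∫ x in (-1:ℝ)..1, (randTrunc b q r x - f x)^2 / Real.sqrt (1 - x^2)
        = ‖Pr - F‖^2 := by
      rw [← integral_chebMeasure (fun x => (randTrunc b q r x - f x)^2),
        ← real_inner_self_eq_norm_sq, L2.inner_def]
      have hcoe : ((Pr - F : Lp ℝ 2 chebMeasure) : ℝ → ℝ) =ᵐ[chebMeasure]
          fun x => randTrunc b q r x - f x := by
        filter_upwards [Lp.coeFn_sub Pr F,
          coeFn_finset_sum (Finset.range (r+1)) (fun j => (b j / (1 - S j)) • TjL2 j),
          ae_all_iff.2 (fun j => Lp.coeFn_smul (b j / (1 - S j)) (TjL2 j)),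
          ae_all_iff.2 coeFn_TjL2, hae] with x h1 h2 h3 h4 h5
        rw [h1]
        simp only [Pi.sub_apply]
        rw [h2, h5]
        congr 1
        refine Finset.sum_congr rfl fun j _ => ?_
        rw [h3 j]
        simp [h4 j, hS_def]
      refine (integral_congr_ae ?_).symm
      filter_upwards [hcoe] with x hx
      rw [RCLike.inner_apply, conj_trivial, hx]
      ring
    have hPrSum : HasSum
        (fun j => ((if j ≤ r then b j / (1 - S j) * nrm j else 0) - c j) • ejL2 j) (Pr - F) := by
      have h1 : HasSum
          (fun j => (if j ≤ r then b j / (1 - S j) * nrm j else 0) • ejL2 j) Pr := by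
        have h2 := hasSum_sum_of_ne_finset_zero (L := SummationFilter.unconditional ℕ) (s := Finset.range (r+1))
          (f := fun j => (if j ≤ r then b j / (1 - S j) * nrm j else 0) • ejL2 j)
          (fun j hj => by
            have hnot : ¬ j ≤ r := fun h => hj (Finset.mem_range.2 (Nat.lt_succ_of_le h))
            simp [hnot])
        have h3 : ∑ j ∈ Finset.range (r+1),
            (if j ≤ r then b j / (1 - S j) * nrm j else 0) • ejL2 j = Pr := by
          rw [hPr]
          refine Finset.sum_congr rfl fun j hj => ?_
          rw [if_pos (Nat.lt_succ_iff.1 (Finset.mem_range.1 hj)), TjL2_eq j, smul_smul]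
        rwa [h3] at h2
      simpa [sub_smul] using h1.sub hF
    have hNorm := hasSum_norm_sq_of_orthonormal orthonormal_ej hPrSum
    rw [hInt]
    have h0 : ((if (0:ℕ) ≤ r then b 0 / (1 - S 0) * nrm 0 else 0) - c 0) = 0 := by
      have hS0 : S 0 = 0 := by simp [hS_def]
      rw [if_pos (Nat.zero_le r), hS0, hc_def]
      norm_num
    have hshift := (hasSum_nat_add_iff'
      (f := fun j => (((if j ≤ r then b j / (1 - S j) * nrm j else 0) - c j))^2)
      (g := ‖Pr - F‖ ^ 2) 1).2 hNorm
    rw [show ‖Pr - F‖ ^ 2 - ∑ i ∈ Finset.range 1,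
        (((if i ≤ r then b i / (1 - S i) * nrm i else 0) - c i))^2 = ‖Pr - F‖ ^ 2 by
      rw [Finset.range_one, Finset.sum_singleton, h0]; ring] at hshift
    have hfun : ∀ j : ℕ,
        (((if j + 1 ≤ r then b (j+1) / (1 - S (j+1)) * nrm (j+1) else 0) - c (j+1)))^2
        = Real.pi / 2 * (b (j+1))^2 *
            (if j + 1 ≤ r then (S (j+1) / (1 - S (j+1)))^2 else 1) := by
      intro j
      have hn : nrm (j+1) ^ 2 = Real.pi / 2 := by rw [nrm_sq]; simp
      by_cases hjr : j + 1 ≤ r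
      · rw [if_pos hjr, if_pos hjr, hc_def]
        have he : b (j+1) / (1 - S (j+1)) * nrm (j+1) - b (j+1) * nrm (j+1)
            = (b (j+1) * (S (j+1) / (1 - S (j+1)))) * nrm (j+1) := by
          field_simp [hSne (j+1)]
          ring
        rw [he, mul_pow, mul_pow, hn]
        ring
      · rw [if_neg hjr, if_neg hjr, hc_def]
        have he : (0 - b (j+1) * nrm (j+1))^2 = b (j+1)^2 * nrm (j+1)^2 := by ring
        rw [he, hn]
        ring
    exact HasSum.congr_fun hshift fun j => (hfun j).symm
  -- outer summation
  set φ : ℕ → ℕ → ℝ :=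
    fun r j => if j + 1 ≤ r then (S (j+1) / (1 - S (j+1)))^2 else 1 with hφ_def
  have hφ_nonneg : ∀ r j, 0 ≤ φ r j := fun r j => by
    rw [hφ_def]; dsimp only; split
    · exact sq_nonneg _
    · exact zero_le_one
  have hφ_le : ∀ r j, φ r j ≤ (S (j+1) / (1 - S (j+1)))^2 + 1 := fun r j => by
    rw [hφ_def]; dsimp only; split
    · linarith
    · nlinarith [sq_nonneg (S (j+1) / (1 - S (j+1)))]
  set a : ℕ → ℕ → ℝ := fun r j => q r * (Real.pi / 2 * (b (j+1))^2 * φ r j) with ha_def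
  have ha_nonneg : ∀ r j, 0 ≤ a r j := fun r j =>
    mul_nonneg (hq0 r) (mul_nonneg (mul_nonneg (by positivity) (sq_nonneg _)) (hφ_nonneg r j))
  have hrow : ∀ r, Summable (a r) := fun r => ((key_r r).mul_left (q r)).summable
  have hbound : ∀ j r, a r j ≤ q r * (Real.pi / 2 * (b (j+1))^2 *
      ((S (j+1) / (1 - S (j+1)))^2 + 1)) := fun j r => by
    rw [ha_def]; dsimp only
    exact mul_le_mul_of_nonneg_left
      (mul_le_mul_of_nonneg_left (hφ_le r j) (by positivity)) (hq0 r)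
  have hcol : ∀ j, Summable fun r => a r j := fun j =>
    Summable.of_nonneg_of_le (fun r => ha_nonneg r j) (hbound j)
      (hq1.summable.mul_right _)
  have hsumφ : ∀ j, Summable (fun r => q r * φ r j) := fun j => by
    refine Summable.of_nonneg_of_le (fun r => mul_nonneg (hq0 r) (hφ_nonneg r j))
      (fun r => ?_) (hq1.summable.mul_right ((S (j+1) / (1 - S (j+1)))^2 + 1))
    exact mul_le_mul_of_nonneg_left (hφ_le r j) (hq0 r)
  have htail : ∀ j : ℕ, ∑' k, q (k + (j+1)) = 1 - S (j+1) := fun j => by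
    have h1 := Summable.sum_add_tsum_nat_add (f := q) (j+1) hq1.summable
    rw [hq1.tsum_eq] at h1
    have h2 : S (j+1) = ∑ i ∈ Finset.range (j+1), q i := rfl
    linarith
  have hcolsum : ∀ j, ∑' r, a r j
      = Real.pi / 2 * ((b (j+1))^2 * (S (j+1) / (1 - S (j+1)))) := by
    intro j
    have h1 : ∀ r, a r j = (Real.pi / 2 * (b (j+1))^2) * (q r * φ r j) := fun r => by
      rw [ha_def]; dsimp only; ring
    have h2 : ∑' r, a r j = (Real.pi / 2 * (b (j+1))^2) * ∑' r, (q r * φ r j) := by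
      rw [← tsum_mul_left]
      exact tsum_congr h1
    have h3 := Summable.sum_add_tsum_nat_add (f := fun r => q r * φ r j) (j+1) (hsumφ j)
    have h4 : ∑ i ∈ Finset.range (j+1), q i * φ i j = S (j+1) := by
      have : ∀ i ∈ Finset.range (j+1), q i * φ i j = q i := fun i hi => by
        have hne : ¬ (j + 1 ≤ i) := by
          have := Finset.mem_range.1 hi; omega
        rw [hφ_def]; dsimp only; rw [if_neg hne, mul_one]
      rw [Finset.sum_congr rfl this]
    have h5 : ∑' k, q (k + (j+1)) * φ (k + (j+1)) j
        = (1 - S (j+1)) * (S (j+1) / (1 - S (j+1)))^2 := by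
      have : ∀ k : ℕ, q (k + (j+1)) * φ (k + (j+1)) j
          = q (k + (j+1)) * (S (j+1) / (1 - S (j+1)))^2 := fun k => by
        have hle : j + 1 ≤ k + (j+1) := Nat.le_add_left _ _
        rw [hφ_def]; dsimp only; rw [if_pos hle]
      rw [tsum_congr this, tsum_mul_right, htail j]
    have h6 : ∑' r, q r * φ r j = S (j+1) + (1 - S (j+1)) * (S (j+1) / (1 - S (j+1)))^2 := by
      rw [← h3, h4, h5]
    have h7 : S (j+1) + (1 - S (j+1)) * (S (j+1) / (1 - S (j+1)))^2
        = S (j+1) / (1 - S (j+1)) := by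
      field_simp [hSne (j+1)]
      ring
    rw [h2, h6, h7]
    ring
  calc ∑' r : ℕ, q r * ∫ x in (-1:ℝ)..1,
          (randTrunc b q r x - f x) ^ 2 / Real.sqrt (1 - x ^ 2)
      = ∑' r, ∑' j, a r j := by
        refine tsum_congr fun r => ?_
        rw [← (((key_r r).mul_left (q r)).tsum_eq)]
    _ = ∑' j, ∑' r, a r j := tsum_comm_of_nonneg ha_nonneg hrow hcol
    _ = ∑' j, Real.pi / 2 * ((b (j+1))^2 * (S (j+1) / (1 - S (j+1)))) := tsum_congr hcolsum
    _ = _ := by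
        rw [← tsum_mul_left]
        refine tsum_congr fun j => ?_
        rw [mul_div_assoc]
end

section
/- Let A = θθᵀ + εI for θ ∈ ℝ^{d×r} and ε > 0, with all eigenvalues of A in [−1,1], and let p_n(x) = Σ_{j=0}^n b_j T_j(x) with n ≥ 1. Then for any v ∈ ℝ^d, the gradient with respect to θ satisfies ∇_θ (vᵀ p_n(A) v) = 2 Σ_{i=0}^{n−1} (2 − 1_{i=0}) · w_i · (Σ_{j=i}^{n−1} b_{j+1} y_{j−i})ᵀ · θ, where w_{j+1} = 2A w_j − w_{j−1}, w_1 = Av, w_0 = v, and y_{j+1} = 2w_{j+1} + y_{j−1}, y_1 = 2Av, y_0 = v. -/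
open Matrix Polynomial Finset

/-- `A(θ) = θθᵀ + εI`. -/
noncomputable def gramMat {d r : ℕ} (ε : ℝ) (θ : Matrix (Fin d) (Fin r) ℝ) :
    Matrix (Fin d) (Fin d) ℝ :=
  θ * θ.transpose + ε • (1 : Matrix (Fin d) (Fin d) ℝ)

/-- Updating a single entry `(a, c)` of a matrix. -/
def updateEntry {d r : ℕ} (θ : Matrix (Fin d) (Fin r) ℝ) (a : Fin d) (c : Fin r)
    (t : ℝ) : Matrix (Fin d) (Fin r) ℝ :=
  Matrix.of (Function.update θ a (Function.update (θ a) c t))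

section AuxCheb

variable {d : ℕ}

noncomputable def TT (A : Matrix (Fin d) (Fin d) ℝ) (k : ℤ) : Matrix (Fin d) (Fin d) ℝ :=
  aeval A (Polynomial.Chebyshev.T ℝ k)

noncomputable def UU (A : Matrix (Fin d) (Fin d) ℝ) (k : ℤ) : Matrix (Fin d) (Fin d) ℝ :=
  aeval A (Polynomial.Chebyshev.U ℝ k)

noncomputable def cc (m : ℕ) : ℝ := 2 - if m = 0 then 1 else 0

lemma comm_aeval (A : Matrix (Fin d) (Fin d) ℝ) (P : ℝ[X]) :
    A * aeval A P = aeval A P * A := by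
  have h : aeval A (X * P) = aeval A (P * X) := by ring_nf
  simpa [_root_.map_mul] using h

lemma UU_step (A : Matrix (Fin d) (Fin d) ℝ) (k : ℤ) :
    UU A (k+2) = (2:ℝ) • (UU A (k+1) * A) - UU A k := by
  unfold UU
  rw [Polynomial.Chebyshev.U_add_two]
  simp only [map_sub, _root_.map_mul, map_ofNat, aeval_X]
  rw [mul_assoc, comm_aeval, two_mul, ← two_smul ℝ]

lemma TT_step (A : Matrix (Fin d) (Fin d) ℝ) (k : ℤ) :
    TT A (k+2) = (2:ℝ) • (A * TT A (k+1)) - TT A k := by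
  unfold TT
  rw [Polynomial.Chebyshev.T_add_two]
  simp only [map_sub, _root_.map_mul, map_ofNat, aeval_X]
  rw [mul_assoc, two_mul, ← two_smul ℝ]

lemma UU_neg_one (A : Matrix (Fin d) (Fin d) ℝ) : UU A (-1) = 0 := by
  simp [UU, Polynomial.Chebyshev.U_neg_one]

lemma UU_neg_two (A : Matrix (Fin d) (Fin d) ℝ) : UU A (-2) = -1 := by
  simp [UU, Polynomial.Chebyshev.U_neg_two]

lemma TT_zero (A : Matrix (Fin d) (Fin d) ℝ) : TT A 0 = 1 := by
  simp [TT, Polynomial.Chebyshev.T_zero]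

lemma TT_one (A : Matrix (Fin d) (Fin d) ℝ) : TT A 1 = A := by
  simp [TT, Polynomial.Chebyshev.T_one]

lemma UU_zero (A : Matrix (Fin d) (Fin d) ℝ) : UU A 0 = 1 := by
  simp [UU, Polynomial.Chebyshev.U_zero]

lemma UU_one (A : Matrix (Fin d) (Fin d) ℝ) : UU A 1 = (2:ℝ) • A := by
  rw [show (1:ℤ) = -1 + 2 by ring, UU_step, UU_neg_one,
    show (-1:ℤ) + 1 = 0 by ring, UU_zero]
  simp

lemma TT_two (A : Matrix (Fin d) (Fin d) ℝ) : TT A 2 = (2:ℝ) • (A * A) - 1 := by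
  rw [show (2:ℤ) = 0 + 2 by ring, TT_step, show (0:ℤ) + 1 = 1 by ring, TT_one, TT_zero]

lemma comm_TT (A : Matrix (Fin d) (Fin d) ℝ) (k : ℤ) : A * TT A k = TT A k * A :=
  comm_aeval A _

lemma comm_UU (A : Matrix (Fin d) (Fin d) ℝ) (k : ℤ) : A * UU A k = UU A k * A :=
  comm_aeval A _

noncomputable def chebS (A V : Matrix (Fin d) (Fin d) ℝ) (p : ℕ) : Matrix (Fin d) (Fin d) ℝ :=
  ∑ m ∈ range (p+1), cc m • (TT A m * V * UU A ((p:ℤ) - m))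

noncomputable def chebS' (A V : Matrix (Fin d) (Fin d) ℝ) (p : ℕ) : Matrix (Fin d) (Fin d) ℝ :=
  ∑ m ∈ range (p+1), cc m • (UU A ((p:ℤ) - m) * V * TT A m)

lemma chebS_rec (A V : Matrix (Fin d) (Fin d) ℝ) (p : ℕ) :
    chebS A V (p+2) = (2:ℝ) • (chebS A V (p+1) * A) - chebS A V p
      + (2:ℝ) • (TT A ((p:ℤ)+2) * V) := by
  have h2 : chebS A V (p+2)
      = ∑ m ∈ range (p+3), cc m • (TT A m * V * UU A (((p:ℤ)+2) - m)) := by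
    unfold chebS
    refine Finset.sum_congr (by norm_num) fun m _ => ?_
    push_cast; ring_nf
  have hrec : ∑ m ∈ range (p+3), cc m • (TT A m * V * UU A (((p:ℤ)+2) - m))
      = (2:ℝ) • ((∑ m ∈ range (p+3), cc m • (TT A m * V * UU A (((p:ℤ)+1) - m))) * A)
        - ∑ m ∈ range (p+3), cc m • (TT A m * V * UU A ((p:ℤ) - m)) := by
    rw [Finset.sum_mul, Finset.smul_sum, ← Finset.sum_sub_distrib]
    refine Finset.sum_congr rfl fun m _ => ?_
    rw [show (p:ℤ)+2 - m = ((p:ℤ) - m) + 2 by ring, UU_step,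
        show (p:ℤ)+1 - m = ((p:ℤ) - m) + 1 by ring]
    simp only [mul_sub, smul_sub, smul_smul, smul_mul_assoc, mul_smul_comm, mul_assoc]
    module
  have hg1 : ∑ m ∈ range (p+3), cc m • (TT A m * V * UU A (((p:ℤ)+1) - m))
      = chebS A V (p+1) := by
    rw [Finset.sum_range_succ,
      show ((p:ℤ)+1) - ((p+2 : ℕ):ℤ) = -1 by push_cast; ring, UU_neg_one]
    simp only [mul_zero, smul_zero, add_zero]
    unfold chebS
    refine Finset.sum_congr rfl fun m _ => ?_
    push_cast; ring_nf
  have hg0 : ∑ m ∈ range (p+3), cc m • (TT A m * V * UU A ((p:ℤ) - m))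
      = chebS A V p - (2:ℝ) • (TT A ((p:ℤ)+2) * V) := by
    rw [Finset.sum_range_succ, Finset.sum_range_succ,
      show (p:ℤ) - ((p+1 : ℕ):ℤ) = -1 by push_cast; ring,
      show (p:ℤ) - ((p+2 : ℕ):ℤ) = -2 by push_cast; ring, UU_neg_one, UU_neg_two,
      show cc (p+2) = 2 by simp [cc]]
    unfold chebS
    simp only [mul_zero, smul_zero, add_zero, mul_neg_one, smul_neg]
    rw [show ((p+2 : ℕ):ℤ) = (p:ℤ)+2 by push_cast; ring]
    abel
  rw [h2, hrec, hg1, hg0]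
  abel

lemma UU_step' (A : Matrix (Fin d) (Fin d) ℝ) (k : ℤ) :
    UU A (k+2) = (2:ℝ) • (A * UU A (k+1)) - UU A k := by
  rw [UU_step, ← comm_UU]

lemma chebS'_rec (A V : Matrix (Fin d) (Fin d) ℝ) (p : ℕ) :
    chebS' A V (p+2) = (2:ℝ) • (A * chebS' A V (p+1)) - chebS' A V p
      + (2:ℝ) • (V * TT A ((p:ℤ)+2)) := by
  have h2 : chebS' A V (p+2)
      = ∑ m ∈ range (p+3), cc m • (UU A (((p:ℤ)+2) - m) * V * TT A m) := by
    unfold chebS'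
    refine Finset.sum_congr (by norm_num) fun m _ => ?_
    push_cast; ring_nf
  have hrec : ∑ m ∈ range (p+3), cc m • (UU A (((p:ℤ)+2) - m) * V * TT A m)
      = (2:ℝ) • (A * ∑ m ∈ range (p+3), cc m • (UU A (((p:ℤ)+1) - m) * V * TT A m))
        - ∑ m ∈ range (p+3), cc m • (UU A ((p:ℤ) - m) * V * TT A m) := by
    rw [Finset.mul_sum, Finset.smul_sum, ← Finset.sum_sub_distrib]
    refine Finset.sum_congr rfl fun m _ => ?_
    rw [show (p:ℤ)+2 - m = ((p:ℤ) - m) + 2 by ring, UU_step',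
        show (p:ℤ)+1 - m = ((p:ℤ) - m) + 1 by ring]
    simp only [sub_mul, smul_sub, smul_smul, smul_mul_assoc, mul_smul_comm, mul_assoc]
    module
  have hg1 : ∑ m ∈ range (p+3), cc m • (UU A (((p:ℤ)+1) - m) * V * TT A m)
      = chebS' A V (p+1) := by
    rw [Finset.sum_range_succ,
      show ((p:ℤ)+1) - ((p+2 : ℕ):ℤ) = -1 by push_cast; ring, UU_neg_one]
    simp only [zero_mul, smul_zero, add_zero]
    unfold chebS'
    refine Finset.sum_congr rfl fun m _ => ?_
    push_cast; ring_nf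
  have hg0 : ∑ m ∈ range (p+3), cc m • (UU A ((p:ℤ) - m) * V * TT A m)
      = chebS' A V p - (2:ℝ) • (V * TT A ((p:ℤ)+2)) := by
    rw [Finset.sum_range_succ, Finset.sum_range_succ,
      show (p:ℤ) - ((p+1 : ℕ):ℤ) = -1 by push_cast; ring,
      show (p:ℤ) - ((p+2 : ℕ):ℤ) = -2 by push_cast; ring, UU_neg_one, UU_neg_two,
      show cc (p+2) = 2 by simp [cc]]
    unfold chebS'
    simp only [zero_mul, smul_zero, add_zero, neg_one_mul, neg_mul, smul_neg, one_mul]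
    rw [show ((p+2 : ℕ):ℤ) = (p:ℤ)+2 by push_cast; ring, ← sub_eq_add_neg]
  rw [h2, hrec, hg1, hg0]
  abel

lemma chebS_zero (A V : Matrix (Fin d) (Fin d) ℝ) : chebS A V 0 = V := by
  norm_num [chebS, cc, TT_zero, UU_zero]

lemma chebS'_zero (A V : Matrix (Fin d) (Fin d) ℝ) : chebS' A V 0 = V := by
  norm_num [chebS', cc, TT_zero, UU_zero]

lemma chebS_one (A V : Matrix (Fin d) (Fin d) ℝ) :
    chebS A V 1 = (2:ℝ) • (V * A) + (2:ℝ) • (A * V) := by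
  rw [chebS, Finset.sum_range_succ, Finset.sum_range_succ, Finset.sum_range_zero]
  norm_num [cc, TT_zero, TT_one, UU_zero, UU_one]

lemma chebS'_one (A V : Matrix (Fin d) (Fin d) ℝ) :
    chebS' A V 1 = (2:ℝ) • (A * V) + (2:ℝ) • (V * A) := by
  rw [chebS', Finset.sum_range_succ, Finset.sum_range_succ, Finset.sum_range_zero]
  norm_num [cc, TT_zero, TT_one, UU_zero, UU_one]

lemma TT_step' (A : Matrix (Fin d) (Fin d) ℝ) (p : ℕ) :
    TT A ((p:ℤ)+3) = (2:ℝ) • (TT A ((p:ℤ)+2) * A) - TT A ((p:ℤ)+1) := by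
  rw [show (p:ℤ)+3 = ((p:ℤ)+1)+2 by ring, TT_step, comm_TT,
    show (p:ℤ)+1+1 = (p:ℤ)+2 by ring]

lemma chebS_comm (A V : Matrix (Fin d) (Fin d) ℝ) : ∀ p : ℕ,
    chebS A V p * A - A * chebS A V p
      = V * TT A ((p:ℤ)+1) - TT A ((p:ℤ)+1) * V := by
  have base0 : chebS A V 0 * A - A * chebS A V 0
      = V * TT A (((0:ℕ):ℤ)+1) - TT A (((0:ℕ):ℤ)+1) * V := by
    rw [chebS_zero]
    norm_num [TT_one]
  have base1 : chebS A V 1 * A - A * chebS A V 1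
      = V * TT A (((1:ℕ):ℤ)+1) - TT A (((1:ℕ):ℤ)+1) * V := by
    rw [chebS_one]
    norm_num [TT_two]
    simp only [two_smul]
    noncomm_ring
  have step : ∀ k : ℕ,
      (chebS A V k * A - A * chebS A V k
        = V * TT A ((k:ℤ)+1) - TT A ((k:ℤ)+1) * V) →
      (chebS A V (k+1) * A - A * chebS A V (k+1)
        = V * TT A ((k:ℤ)+2) - TT A ((k:ℤ)+2) * V) →
      (chebS A V (k+2) * A - A * chebS A V (k+2)
        = V * TT A ((k:ℤ)+3) - TT A ((k:ℤ)+3) * V) := by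
    intro k ih1 ih2
    have hT : TT A ((k:ℤ)+3) = (2:ℝ) • (TT A ((k:ℤ)+2) * A) - TT A ((k:ℤ)+1) :=
      TT_step' A k
    rw [chebS_rec, hT]
    calc ((2:ℝ) • (chebS A V (k+1) * A) - chebS A V k
            + (2:ℝ) • (TT A ((k:ℤ)+2) * V)) * A
          - A * ((2:ℝ) • (chebS A V (k+1) * A) - chebS A V k
            + (2:ℝ) • (TT A ((k:ℤ)+2) * V))
        = (2:ℝ) • ((chebS A V (k+1) * A - A * chebS A V (k+1)) * A)
            - (chebS A V k * A - A * chebS A V k)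
            + ((2:ℝ) • ((TT A ((k:ℤ)+2) * V) * A)
              - (2:ℝ) • ((A * TT A ((k:ℤ)+2)) * V)) := by
          simp only [two_smul]
          noncomm_ring
      _ = (2:ℝ) • ((V * TT A ((k:ℤ)+2) - TT A ((k:ℤ)+2) * V) * A)
            - (V * TT A ((k:ℤ)+1) - TT A ((k:ℤ)+1) * V)
            + ((2:ℝ) • ((TT A ((k:ℤ)+2) * V) * A)
              - (2:ℝ) • ((TT A ((k:ℤ)+2) * A) * V)) := by
          rw [ih1, ih2, comm_TT]
      _ = V * ((2:ℝ) • (TT A ((k:ℤ)+2) * A) - TT A ((k:ℤ)+1))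
            - ((2:ℝ) • (TT A ((k:ℤ)+2) * A) - TT A ((k:ℤ)+1)) * V := by
          simp only [two_smul]
          noncomm_ring
  have key : ∀ p : ℕ,
      (chebS A V p * A - A * chebS A V p
        = V * TT A ((p:ℤ)+1) - TT A ((p:ℤ)+1) * V) ∧
      (chebS A V (p+1) * A - A * chebS A V (p+1)
        = V * TT A ((p:ℤ)+2) - TT A ((p:ℤ)+2) * V) := by
    intro p
    induction p with
    | zero =>
        refine ⟨base0, ?_⟩
        have := base1
        push_cast at this ⊢
        convert this using 3 <;> norm_num
    | succ k ih =>
        refine ⟨ih.2, ?_⟩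
        have := step k ih.1 ih.2
        push_cast at this ⊢
        convert this using 3 <;> push_cast <;> ring
  exact fun p => (key p).1

lemma chebS_eq_chebS' (A V : Matrix (Fin d) (Fin d) ℝ) : ∀ p : ℕ,
    chebS A V p = chebS' A V p := by
  have step : ∀ k : ℕ,
      chebS A V k = chebS' A V k →
      chebS A V (k+1) = chebS' A V (k+1) →
      chebS A V (k+2) = chebS' A V (k+2) := by
    intro k ih1 ih2
    rw [chebS_rec, chebS'_rec, ← ih1, ← ih2]
    have hc := chebS_comm A V (k+1)
    have hc' : chebS A V (k+1) * A
        = A * chebS A V (k+1) + (V * TT A ((k:ℤ)+2) - TT A ((k:ℤ)+2) * V) := by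
      push_cast at hc
      rw [show (k:ℤ)+1+1 = (k:ℤ)+2 by ring] at hc
      rw [← hc]; abel
    rw [hc']
    simp only [smul_add, smul_sub]
    abel
  have key : ∀ p : ℕ,
      chebS A V p = chebS' A V p ∧ chebS A V (p+1) = chebS' A V (p+1) := by
    intro p
    induction p with
    | zero =>
        refine ⟨by rw [chebS_zero, chebS'_zero], ?_⟩
        rw [chebS_one, chebS'_one]; abel
    | succ k ih => exact ⟨ih.2, step k ih.1 ih.2⟩
  exact fun p => (key p).1


lemma aeval_transpose (M : Matrix (Fin d) (Fin d) ℝ) (P : ℝ[X]) :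
    (aeval M P)ᵀ = aeval Mᵀ P := by
  induction P using Polynomial.induction_on' with
  | add p q hp hq => simp [map_add, hp, hq]
  | monomial k r =>
      rw [aeval_monomial, aeval_monomial, Matrix.transpose_mul, Matrix.transpose_pow]
      rw [show (algebraMap ℝ (Matrix (Fin d) (Fin d) ℝ)) r = r • 1 by
        simp [Algebra.algebraMap_eq_smul_one]]
      simp [Matrix.smul_mul, Matrix.mul_smul]

lemma hasDerivAt_mulVec {M : ℝ → Matrix (Fin d) (Fin d) ℝ} {N : Matrix (Fin d) (Fin d) ℝ}
    {u : ℝ → Fin d → ℝ} {u' : Fin d → ℝ} {s : ℝ}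
    (hM : ∀ i j, HasDerivAt (fun t => M t i j) (N i j) s)
    (hu : ∀ i, HasDerivAt (fun t => u t i) (u' i) s) (i : Fin d) :
    HasDerivAt (fun t => (M t *ᵥ u t) i) ((N *ᵥ u s) i + (M s *ᵥ u') i) s := by
  simp only [Matrix.mulVec, dotProduct]
  rw [← Finset.sum_add_distrib]
  exact HasDerivAt.fun_sum fun k _ => (hM i k).mul (hu k)

lemma U_two_T (n : ℤ) :
    Polynomial.Chebyshev.U ℝ (n+2) = 2 * Polynomial.Chebyshev.T ℝ (n+2)
      + Polynomial.Chebyshev.U ℝ n := by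
  have h1 := Polynomial.Chebyshev.U_add_two ℝ n
  have h2 := Polynomial.Chebyshev.U_eq_X_mul_U_add_T ℝ (n+1)
  rw [show (n:ℤ)+1+1 = n+2 by ring] at h2
  linear_combination 2 * h2 - h1

lemma vecMulVec_mulVec_left (M : Matrix (Fin d) (Fin d) ℝ) (u z : Fin d → ℝ) :
    vecMulVec (M *ᵥ u) z = M * vecMulVec u z := by
  ext i j
  simp [Matrix.vecMulVec_apply, Matrix.mul_apply, Matrix.mulVec, dotProduct,
    Finset.sum_mul, mul_assoc]

lemma vecMulVec_mulVec_right (M : Matrix (Fin d) (Fin d) ℝ) (u z : Fin d → ℝ) :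
    vecMulVec u (M *ᵥ z) = vecMulVec u z * Mᵀ := by
  ext i j
  simp only [Matrix.vecMulVec_apply, Matrix.mul_apply, Matrix.mulVec, dotProduct,
    Matrix.transpose_apply, Finset.mul_sum]
  refine Finset.sum_congr rfl fun k _ => ?_
  ring

lemma vecMulVec_transpose (u z : Fin d → ℝ) :
    (vecMulVec u z)ᵀ = vecMulVec z u := by
  ext i j
  simp [Matrix.vecMulVec_apply, mul_comm]

lemma UU_eq_two_TT (A : Matrix (Fin d) (Fin d) ℝ) (k : ℤ) :
    UU A (k+2) = (2:ℝ) • TT A (k+2) + UU A k := by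
  unfold UU TT
  rw [U_two_T]
  simp only [map_add, _root_.map_mul, map_ofNat]
  rw [two_mul, ← two_smul ℝ]

end AuxCheb

lemma sum_mulVec' {ι : Type*} (s : Finset ι) (M : ι → Matrix (Fin d) (Fin d) ℝ)
    (u : Fin d → ℝ) : (∑ j ∈ s, M j) *ᵥ u = ∑ j ∈ s, (M j *ᵥ u) := by
  ext i
  simp only [Matrix.mulVec, dotProduct, Matrix.sum_apply, Finset.sum_mul,
    Finset.sum_apply]
  rw [Finset.sum_comm]

lemma dotProduct_sum' {ι : Type*} (s : Finset ι) (u : Fin d → ℝ)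
    (z : ι → Fin d → ℝ) : u ⬝ᵥ (∑ j ∈ s, z j) = ∑ j ∈ s, u ⬝ᵥ z j := by
  simp only [dotProduct, Finset.sum_apply, Finset.mul_sum]
  rw [Finset.sum_comm]

lemma vecMulVec_sum_right {ι : Type*} (s : Finset ι) (u : Fin d → ℝ)
    (z : ι → Fin d → ℝ) :
    vecMulVec u (∑ j ∈ s, z j) = ∑ j ∈ s, vecMulVec u (z j) := by
  ext i k
  simp [Matrix.vecMulVec_apply, Matrix.sum_apply, Finset.sum_apply, Finset.mul_sum]

lemma mulVec_sumvec {ι : Type*} (s : Finset ι) (M : Matrix (Fin d) (Fin d) ℝ)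
    (z : ι → Fin d → ℝ) : M *ᵥ (∑ j ∈ s, z j) = ∑ j ∈ s, M *ᵥ z j := by
  ext i
  simp only [Matrix.mulVec, dotProduct, Finset.sum_apply, Finset.mul_sum]
  rw [Finset.sum_comm]

lemma vecMulVec_smul_right (r : ℝ) (u z : Fin d → ℝ) :
    vecMulVec u (r • z) = r • vecMulVec u z := by
  ext i k
  simp [Matrix.vecMulVec_apply]
  ring

theorem amortized_gradient_formula {d r : ℕ} (θ : Matrix (Fin d) (Fin r) ℝ)
    (ε : ℝ) (hε : 0 < ε) (b : ℕ → ℝ) (n : ℕ) (hn : 1 ≤ n) (v : Fin d → ℝ)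
    (hA : (gramMat ε θ).IsHermitian)
    (heig : ∀ k : Fin d, hA.eigenvalues k ∈ Set.Icc (-1:ℝ) 1)
    (w y : ℕ → Fin d → ℝ)
    (hw0 : w 0 = v) (hw1 : w 1 = gramMat ε θ *ᵥ v)
    (hwrec : ∀ j : ℕ, 1 ≤ j →
      w (j + 1) = (2:ℝ) • (gramMat ε θ *ᵥ w j) - w (j - 1))
    (hy0 : y 0 = v) (hy1 : y 1 = (2:ℝ) • (gramMat ε θ *ᵥ v))
    (hyrec : ∀ j : ℕ, 1 ≤ j → y (j + 1) = (2:ℝ) • w (j + 1) + y (j - 1)) :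
    (Matrix.of fun (a : Fin d) (c : Fin r) =>
        deriv (fun t : ℝ =>
          v ⬝ᵥ ((Polynomial.aeval (gramMat ε (updateEntry θ a c t))
            (∑ j ∈ Finset.range (n + 1),
              Polynomial.C (b j) * Polynomial.Chebyshev.T ℝ j)) *ᵥ v)) (θ a c))
      = (2:ℝ) • ∑ i ∈ Finset.range n,
          ((2:ℝ) - if i = 0 then 1 else 0) •
            (Matrix.vecMulVec (w i)
              (∑ j ∈ Finset.Icc i (n - 1), b (j + 1) • y (j - i)) * θ) := by
  classical
  have hAsymm : (gramMat ε θ)ᵀ = gramMat ε θ := by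
    unfold gramMat
    rw [Matrix.transpose_add, Matrix.transpose_mul, Matrix.transpose_transpose,
      Matrix.transpose_smul, Matrix.transpose_one]
  set A := gramMat ε θ with hAdef
  have hTTsymm : ∀ k : ℤ, (TT A k)ᵀ = TT A k := fun k => by
    rw [TT, aeval_transpose, hAsymm]
  have hUUsymm : ∀ k : ℤ, (UU A k)ᵀ = UU A k := fun k => by
    rw [UU, aeval_transpose, hAsymm]
  -- closed forms for w and y
  have hwT : ∀ j : ℕ, w j = TT A (j:ℤ) *ᵥ v := by
    have key : ∀ j : ℕ, w j = TT A (j:ℤ) *ᵥ v ∧ w (j+1) = TT A ((j:ℤ)+1) *ᵥ v := by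
      intro j
      induction j with
      | zero =>
          constructor
          · rw [hw0]; norm_num [TT_zero, Matrix.one_mulVec]
          · rw [hw1]; norm_num [TT_one]
      | succ k ih =>
          constructor
          · rw [ih.2]; norm_num
          · have hrec := hwrec (k+1) (by omega)
            simp only [Nat.add_sub_cancel] at hrec
            rw [hrec, ih.1, ih.2]
            rw [show ((k+1:ℕ):ℤ)+1 = (k:ℤ)+2 by push_cast; ring, TT_step,
              Matrix.sub_mulVec, Matrix.smul_mulVec, ← Matrix.mulVec_mulVec]
    exact fun j => (key j).1
  have hyU : ∀ j : ℕ, y j = UU A (j:ℤ) *ᵥ v := by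
    have key : ∀ j : ℕ, y j = UU A (j:ℤ) *ᵥ v ∧ y (j+1) = UU A ((j:ℤ)+1) *ᵥ v := by
      intro j
      induction j with
      | zero =>
          constructor
          · rw [hy0]; norm_num [UU_zero, Matrix.one_mulVec]
          · rw [hy1]; norm_num [UU_one, Matrix.smul_mulVec]
      | succ k ih =>
          constructor
          · rw [ih.2]; norm_num
          · have hrec := hyrec (k+1) (by omega)
            simp only [Nat.add_sub_cancel] at hrec
            rw [hrec, ih.1, hwT (k+2)]
            rw [show ((k+1:ℕ):ℤ)+1 = (k:ℤ)+2 by push_cast; ring, UU_eq_two_TT,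
              Matrix.add_mulVec, Matrix.smul_mulVec,
              show ((k+2:ℕ):ℤ) = (k:ℤ)+2 by push_cast; ring]
    exact fun j => (key j).1
  ext a c
  simp only [Matrix.of_apply]
  -- the perturbation matrix H
  set H : Matrix (Fin d) (Fin d) ℝ :=
    Matrix.of (fun i k : Fin d =>
      (if i = a then θ k c else 0) + (if k = a then θ i c else 0)) with hHdef
  have hupd : updateEntry θ a c (θ a c) = θ := by
    unfold updateEntry
    rw [Function.update_eq_self, Function.update_eq_self (f := (θ : Fin d → Fin r → ℝ))]
    rfl
  -- derivative of each entry of the gram matrix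
  have hu : ∀ (i : Fin d) (l : Fin r), HasDerivAt (fun t => updateEntry θ a c t i l)
      (if i = a ∧ l = c then (1:ℝ) else 0) (θ a c) := by
    intro i l
    have hfn : (fun t => updateEntry θ a c t i l)
        = fun t => if i = a then (if l = c then t else θ a l) else θ i l := by
      funext t
      simp [updateEntry, Function.update_apply (f := (θ : Fin d → Fin r → ℝ)), Function.update_apply, apply_ite (fun (f : Fin r → ℝ) => f l)]
    rw [hfn]
    by_cases hia : i = a <;> by_cases hlc : l = c <;>
      simp only [hia, hlc, if_true, if_false, and_true, and_false, true_and, false_and,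
        if_neg, ite_true, ite_false]
    · exact hasDerivAt_id _
    · exact hasDerivAt_const _ _
    · exact hasDerivAt_const _ _
    · exact hasDerivAt_const _ _
  have hBij : ∀ i k : Fin d,
      HasDerivAt (fun t => gramMat ε (updateEntry θ a c t) i k) (H i k) (θ a c) := by
    intro i k
    have hfn : (fun t => gramMat ε (updateEntry θ a c t) i k)
        = fun t => (∑ l, updateEntry θ a c t i l * updateEntry θ a c t k l)
            + ε * (1 : Matrix (Fin d) (Fin d) ℝ) i k := by
      funext t
      simp [gramMat, Matrix.add_apply, Matrix.mul_apply, Matrix.transpose_apply,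
        Matrix.smul_apply, smul_eq_mul]
    rw [hfn]
    have hsum : HasDerivAt
        (fun t => ∑ l, updateEntry θ a c t i l * updateEntry θ a c t k l)
        (∑ l, ((if i = a ∧ l = c then (1:ℝ) else 0) * θ k l
          + θ i l * (if k = a ∧ l = c then (1:ℝ) else 0))) (θ a c) := by
      refine HasDerivAt.fun_sum fun l _ => ?_
      have := (hu i l).mul (hu k l)
      rwa [hupd] at this
    have hval : (∑ l, ((if i = a ∧ l = c then (1:ℝ) else 0) * θ k l
          + θ i l * (if k = a ∧ l = c then (1:ℝ) else 0))) = H i k := by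
      rw [Finset.sum_add_distrib, hHdef]
      simp only [Matrix.of_apply]
      congr 1
      · by_cases hia : i = a <;>
          simp [hia, ite_and, ite_mul, Finset.sum_ite_eq' Finset.univ c]
      · by_cases hka : k = a <;>
          simp [hka, ite_and, mul_ite, Finset.sum_ite_eq' Finset.univ c]
    exact hval ▸ (hsum.add_const _)
  -- the derivative vectors δ j
  set δ : ℕ → Fin d → ℝ :=
    fun j => ∑ m ∈ range j, cc m • (UU A ((j:ℤ) - 1 - m) *ᵥ (H *ᵥ w m)) with hδdef
  have hδ0 : δ 0 = 0 := by simp [hδdef]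
  have hδ1 : δ 1 = H *ᵥ v := by
    norm_num [hδdef, cc, UU_zero, hw0, Matrix.one_mulVec]
  have hδrec : ∀ j : ℕ, δ (j+2)
      = (2:ℝ) • (H *ᵥ w (j+1)) + ((2:ℝ) • (A *ᵥ δ (j+1)) - δ j) := by
    intro j
    have e1 : δ (j+2) = ∑ m ∈ range (j+2),
        ((2:ℝ) • (A *ᵥ (cc m • (UU A ((j:ℤ) - m) *ᵥ (H *ᵥ w m))))
          - cc m • (UU A ((j:ℤ) - 1 - m) *ᵥ (H *ᵥ w m))) := by
      simp only [hδdef]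
      refine Finset.sum_congr rfl fun m _ => ?_
      rw [show (((j+2:ℕ)):ℤ) - 1 - m = ((j:ℤ) - 1 - m) + 2 by push_cast; ring, UU_step',
        Matrix.sub_mulVec, Matrix.smul_mulVec, ← Matrix.mulVec_mulVec,
        show (j:ℤ) - 1 - m + 1 = (j:ℤ) - m by ring, smul_sub]
      congr 1
      rw [Matrix.mulVec_smul, smul_comm (cc m) (2:ℝ)]
    rw [e1, Finset.sum_sub_distrib]
    have e2 : ∑ m ∈ range (j+2), (2:ℝ) • (A *ᵥ (cc m • (UU A ((j:ℤ) - m) *ᵥ (H *ᵥ w m))))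
        = (2:ℝ) • (A *ᵥ δ (j+1)) := by
      have inner : ∑ m ∈ range (j+2), cc m • (UU A ((j:ℤ) - m) *ᵥ (H *ᵥ w m))
          = δ (j+1) := by
        rw [Finset.sum_range_succ,
          show (j:ℤ) - ((j+1:ℕ):ℤ) = -1 by push_cast; ring, UU_neg_one]
        simp only [Matrix.zero_mulVec, smul_zero, add_zero, hδdef]
        refine Finset.sum_congr rfl fun m _ => ?_
        rw [show (((j+1:ℕ)):ℤ) - 1 - m = (j:ℤ) - m by push_cast; ring]
      rw [← Finset.smul_sum, ← mulVec_sumvec, inner]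
    have e3 : ∑ m ∈ range (j+2), cc m • (UU A ((j:ℤ) - 1 - m) *ᵥ (H *ᵥ w m))
        = δ j - (2:ℝ) • (H *ᵥ w (j+1)) := by
      rw [Finset.sum_range_succ, Finset.sum_range_succ,
        show (j:ℤ) - 1 - ((j:ℕ):ℤ) = -1 by push_cast; ring,
        show (j:ℤ) - 1 - ((j+1:ℕ):ℤ) = -2 by push_cast; ring, UU_neg_one, UU_neg_two,
        show cc (j+1) = 2 by simp [cc]]
      simp only [hδdef]
      simp only [Matrix.zero_mulVec, smul_zero, add_zero, Matrix.neg_mulVec,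
        Matrix.one_mulVec, smul_neg]
      rw [← sub_eq_add_neg]
    rw [e2, e3]
    abel
  -- derivative of the Chebyshev vector functions
  have hφ : ∀ (j : ℕ) (i : Fin d),
      HasDerivAt (fun t =>
        ((aeval (gramMat ε (updateEntry θ a c t)) (Polynomial.Chebyshev.T ℝ (j:ℤ))) *ᵥ v) i)
        (δ j i) (θ a c) := by
    have key : ∀ j : ℕ,
        (∀ i : Fin d, HasDerivAt (fun t =>
          ((aeval (gramMat ε (updateEntry θ a c t)) (Polynomial.Chebyshev.T ℝ (j:ℤ))) *ᵥ v) i)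
          (δ j i) (θ a c)) ∧
        (∀ i : Fin d, HasDerivAt (fun t =>
          ((aeval (gramMat ε (updateEntry θ a c t)) (Polynomial.Chebyshev.T ℝ ((j+1:ℕ):ℤ))) *ᵥ v) i)
          (δ (j+1) i) (θ a c)) := by
      intro j
      induction j with
      | zero =>
          constructor
          · intro i
            have hfn : (fun t =>
                ((aeval (gramMat ε (updateEntry θ a c t)) (Polynomial.Chebyshev.T ℝ ((0:ℕ):ℤ))) *ᵥ v) i)
                = fun _ => v i := by
              funext t
              norm_num [Polynomial.Chebyshev.T_zero, _root_.map_one, Matrix.one_mulVec]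
            rw [hfn, hδ0]
            simpa using hasDerivAt_const (θ a c) (v i)
          · intro i
            have hfn : (fun t =>
                ((aeval (gramMat ε (updateEntry θ a c t)) (Polynomial.Chebyshev.T ℝ ((0+1:ℕ):ℤ))) *ᵥ v) i)
                = fun t => (gramMat ε (updateEntry θ a c t) *ᵥ v) i := by
              funext t
              norm_num [Polynomial.Chebyshev.T_one, Polynomial.aeval_X]
            rw [hfn]
            have h1 := hasDerivAt_mulVec (u := fun _ => v) (u' := 0)
              hBij (fun i' => hasDerivAt_const _ (v i')) i
            rw [hδ1]
            simpa [Matrix.mulVec_zero] using h1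
      | succ k ih =>
          refine ⟨ih.2, fun i => ?_⟩
          have hfn : (fun t =>
              ((aeval (gramMat ε (updateEntry θ a c t)) (Polynomial.Chebyshev.T ℝ ((k+1+1:ℕ):ℤ))) *ᵥ v) i)
              = fun t => (2:ℝ) * ((gramMat ε (updateEntry θ a c t)) *ᵥ
                  ((aeval (gramMat ε (updateEntry θ a c t)) (Polynomial.Chebyshev.T ℝ ((k+1:ℕ):ℤ))) *ᵥ v)) i
                - ((aeval (gramMat ε (updateEntry θ a c t)) (Polynomial.Chebyshev.T ℝ ((k:ℕ):ℤ))) *ᵥ v) i := by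
            funext t
            rw [show ((k+1+1:ℕ):ℤ) = ((k:ℕ):ℤ)+2 by push_cast; ring,
              Polynomial.Chebyshev.T_add_two]
            simp only [map_sub, _root_.map_mul, map_ofNat, Polynomial.aeval_X]
            rw [show ((k:ℤ))+1 = ((k+1:ℕ):ℤ) by push_cast; ring]
            rw [two_mul, ← two_smul ℝ, Matrix.sub_mulVec, ← Matrix.mulVec_mulVec,
              Matrix.smul_mulVec]
            simp [smul_eq_mul]
          rw [hfn]
          have h1 := hasDerivAt_mulVec hBij ih.2 i
          have h2 := (h1.const_mul (2:ℝ)).fun_sub (ih.1 i)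
          refine h2.congr_deriv ?_
          have hδr := congrFun (hδrec k) i
          rw [show k+2 = k+1+1 from rfl] at hδr
          rw [hδr]
          rw [hupd]
          rw [show (aeval A (Polynomial.Chebyshev.T ℝ ((k+1:ℕ):ℤ)) *ᵥ v) = w (k+1) from (hwT (k+1)).symm]
          simp only [Pi.add_apply, Pi.sub_apply, Pi.smul_apply, smul_eq_mul]
          ring
    exact fun j => (key j).1
  -- derivative of the full scalar function
  have hF : HasDerivAt (fun t : ℝ =>
      v ⬝ᵥ ((Polynomial.aeval (gramMat ε (updateEntry θ a c t))
        (∑ j ∈ Finset.range (n + 1), Polynomial.C (b j) * Polynomial.Chebyshev.T ℝ j)) *ᵥ v))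
      (∑ j ∈ range (n+1), b j * (v ⬝ᵥ δ j)) (θ a c) := by
    have hfn : (fun t : ℝ =>
        v ⬝ᵥ ((Polynomial.aeval (gramMat ε (updateEntry θ a c t))
          (∑ j ∈ Finset.range (n + 1), Polynomial.C (b j) * Polynomial.Chebyshev.T ℝ j)) *ᵥ v))
        = fun t => ∑ j ∈ range (n+1),
            b j * (v ⬝ᵥ ((aeval (gramMat ε (updateEntry θ a c t)) (Polynomial.Chebyshev.T ℝ (j:ℤ))) *ᵥ v)) := by
      funext t
      rw [map_sum, sum_mulVec', dotProduct_sum']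
      refine Finset.sum_congr rfl fun j _ => ?_
      rw [_root_.map_mul, Polynomial.aeval_C, ← Algebra.smul_def, Matrix.smul_mulVec,
        dotProduct_smul, smul_eq_mul]
    rw [hfn]
    refine HasDerivAt.fun_sum fun j _ => ?_
    refine HasDerivAt.const_mul _ ?_
    simp only [dotProduct]
    exact HasDerivAt.fun_sum fun i _ => ((hφ j i).const_mul (v i))
  rw [hF.deriv]
  -- dot products against H
  have hHdot : ∀ z u : Fin d → ℝ, z ⬝ᵥ (H *ᵥ u)
      = (∑ i1, θ i1 c * u i1) * z a + (∑ i1, θ i1 c * z i1) * u a := by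
    intro z u
    have hrow : ∀ i : Fin d, (H *ᵥ u) i
        = (if i = a then (∑ k, θ k c * u k) else 0) + θ i c * u a := by
      intro i
      simp only [hHdef, Matrix.mulVec, dotProduct, Matrix.of_apply, add_mul,
        Finset.sum_add_distrib]
      congr 1
      · by_cases hia : i = a <;> simp [hia]
      · simp [ite_mul, Finset.sum_ite_eq' Finset.univ a (fun k => θ i c * u k)]
    simp only [dotProduct, hrow, mul_add, Finset.sum_add_distrib]
    congr 1
    · rw [Finset.sum_congr rfl (fun i (_ : i ∈ Finset.univ) =>
        mul_ite (i = a) (z i) (∑ k, θ k c * u k) 0)]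
      simp [Finset.sum_ite_eq' Finset.univ a (fun i => z i * ∑ k, θ k c * u k)]
      ring
    · rw [Finset.sum_mul]
      exact Finset.sum_congr rfl fun i _ => by ring
  -- the scalar value of the derivative of each Chebyshev term
  have hvδ : ∀ j : ℕ, v ⬝ᵥ δ j = ∑ m ∈ range j, cc m *
      ((∑ i1, θ i1 c * w m i1) * y (j-1-m) a
        + (∑ i1, θ i1 c * y (j-1-m) i1) * w m a) := by
    intro j
    simp only [hδdef]
    rw [dotProduct_sum']
    refine Finset.sum_congr rfl fun m hm => ?_
    rw [dotProduct_smul, smul_eq_mul]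
    congr 1
    rw [Matrix.dotProduct_mulVec,
      show UU A ((j:ℤ)-1-m) = (UU A ((j:ℤ)-1-m))ᵀ from (hUUsymm _).symm,
      Matrix.vecMul_transpose]
    have hyident : UU A ((j:ℤ) - 1 - m) *ᵥ v = y (j-1-m) := by
      have hmj := Finset.mem_range.mp hm
      rw [hyU (j-1-m), show ((j - 1 - m : ℕ) : ℤ) = (j:ℤ) - 1 - m by omega]
    rw [hyident, hHdot]
  -- sum interchange
  have interchange : ∀ (f : ℕ → ℕ → ℝ), ∑ j ∈ range (n+1), ∑ m ∈ range j, f j m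
      = ∑ m ∈ range n, ∑ j ∈ Icc m (n-1), f (j+1) m := by
    intro f
    have h1 := Finset.sum_Ico_Ico_comm' 0 (n+1) (fun m j => f j m)
    simp only [← Finset.range_eq_Ico] at h1
    rw [← h1, Finset.sum_range_succ, Finset.Ico_self, Finset.sum_empty, add_zero]
    refine Finset.sum_congr rfl fun m hm => ?_
    rw [show Finset.Icc m (n-1) = Finset.Ico m n by
      rw [← Finset.Ico_add_one_right_eq_Icc]; congr 1; omega]
    rw [Finset.sum_Ico_eq_sum_range, Finset.sum_Ico_eq_sum_range,
      show (n+1)-(m+1) = n-m by omega]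
    refine Finset.sum_congr rfl fun k _ => ?_
    rw [show m+1+k = m+k+1 by omega]
  set τ : (Fin d → ℝ) → ℝ := fun u => ∑ i1, θ i1 c * u i1 with hτdef
  set sv : ℕ → Fin d → ℝ := fun m => ∑ j ∈ Icc m (n-1), b (j+1) • y (j - m) with hsvdef
  have hsva : ∀ m, sv m a = ∑ j ∈ Icc m (n-1), b (j+1) * y (j-m) a := by
    intro m
    simp [hsvdef, Finset.sum_apply]
  have hτsv : ∀ m, τ (sv m) = ∑ j ∈ Icc m (n-1), b (j+1) * τ (y (j-m)) := by
    intro m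
    simp only [hτdef, hsvdef, Finset.sum_apply, Pi.smul_apply, smul_eq_mul,
      Finset.mul_sum]
    rw [Finset.sum_comm]
    refine Finset.sum_congr rfl fun j _ => ?_
    refine Finset.sum_congr rfl fun i _ => by ring
  have hchain : ∑ j ∈ range (n+1), b j * (v ⬝ᵥ δ j)
      = ∑ m ∈ range n, cc m * (τ (w m) * sv m a + τ (sv m) * w m a) := by
    calc ∑ j ∈ range (n+1), b j * (v ⬝ᵥ δ j)
        = ∑ j ∈ range (n+1), ∑ m ∈ range j,
            b j * (cc m * (τ (w m) * y (j-1-m) a + τ (y (j-1-m)) * w m a)) := by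
          refine Finset.sum_congr rfl fun j _ => ?_
          rw [hvδ j, Finset.mul_sum]
      _ = ∑ m ∈ range n, ∑ j ∈ Icc m (n-1),
            b (j+1) * (cc m * (τ (w m) * y ((j+1)-1-m) a + τ (y ((j+1)-1-m)) * w m a)) :=
          interchange _
      _ = ∑ m ∈ range n, cc m * (τ (w m) * sv m a + τ (sv m) * w m a) := by
          refine Finset.sum_congr rfl fun m hm => ?_
          rw [hsva, hτsv]
          simp only [mul_add, Finset.mul_sum, Finset.sum_mul, ← Finset.sum_add_distrib]
          refine Finset.sum_congr rfl fun j _ => ?_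
          rw [show (j+1)-1-m = j-m by omega]
          ring
  -- symmetry of the gradient matrix
  have hGsymm : ∑ m ∈ range n, cc m * (τ (w m) * sv m a)
      = ∑ m ∈ range n, cc m * (w m a * τ (sv m)) := by
    set V : Matrix (Fin d) (Fin d) ℝ := vecMulVec v v with hVdef
    set G : Matrix (Fin d) (Fin d) ℝ := ∑ m ∈ range n, cc m • vecMulVec (w m) (sv m)
      with hGdef
    have interchange2 : ∀ (F : ℕ → ℕ → Matrix (Fin d) (Fin d) ℝ),
        ∑ m ∈ range n, ∑ j ∈ Icc m (n-1), F m j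
          = ∑ j ∈ range n, ∑ m ∈ range (j+1), F m j := by
      intro F
      have h1 := Finset.sum_Ico_Ico_comm 0 n F
      simp only [← Finset.range_eq_Ico] at h1
      rw [← h1]
      refine Finset.sum_congr rfl fun m hm => ?_
      congr 1
      rw [← Finset.Ico_add_one_right_eq_Icc]; congr 1; omega
    have hGchebS : G = ∑ p ∈ range n, b (p+1) • chebS A V p := by
      simp only [hGdef, hsvdef, vecMulVec_sum_right, vecMulVec_smul_right,
        Finset.smul_sum]
      rw [interchange2]
      refine Finset.sum_congr rfl fun p hp => ?_
      rw [chebS, Finset.smul_sum]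
      refine Finset.sum_congr rfl fun m hm => ?_
      have hmp := Finset.mem_range.mp hm
      rw [hwT m, hyU (p - m), vecMulVec_mulVec_left, vecMulVec_mulVec_right, hUUsymm,
        show ((p - m : ℕ) : ℤ) = (p:ℤ) - m by omega]
      rw [smul_smul, smul_smul, mul_comm (cc m) (b (p+1)), hVdef, Matrix.mul_assoc]
    have hchebT : ∀ p : ℕ, (chebS A V p)ᵀ = chebS' A V p := by
      intro p
      rw [chebS, chebS', Matrix.transpose_sum]
      refine Finset.sum_congr rfl fun m _ => ?_
      rw [Matrix.transpose_smul, Matrix.transpose_mul, Matrix.transpose_mul,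
        hTTsymm, hUUsymm, hVdef, vecMulVec_transpose, Matrix.mul_assoc]
    have hGT : G = Gᵀ := by
      rw [hGchebS, Matrix.transpose_sum]
      refine Finset.sum_congr rfl fun p _ => ?_
      rw [Matrix.transpose_smul, hchebT, chebS_eq_chebS']
    have h2 : (G * θ) a c = ∑ m ∈ range n, cc m * (w m a * τ (sv m)) := by
      simp only [hGdef, hτdef, Matrix.mul_apply, Matrix.sum_apply, Matrix.smul_apply,
        Matrix.vecMulVec_apply, smul_eq_mul, Finset.sum_mul, Finset.mul_sum]
      rw [Finset.sum_comm]
      refine Finset.sum_congr rfl fun m _ => ?_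
      refine Finset.sum_congr rfl fun k _ => by ring
    have h1 : (Gᵀ * θ) a c = ∑ m ∈ range n, cc m * (τ (w m) * sv m a) := by
      simp only [hGdef, hτdef, Matrix.mul_apply, Matrix.transpose_apply,
        Matrix.sum_apply, Matrix.smul_apply, Matrix.vecMulVec_apply, smul_eq_mul,
        Finset.sum_mul, Finset.mul_sum]
      rw [Finset.sum_comm]
      refine Finset.sum_congr rfl fun m _ => ?_
      refine Finset.sum_congr rfl fun k _ => by ring
    rw [← h1, ← h2, ← hGT]
  -- final assembly
  rw [hchain]
  have hRHS : ((2:ℝ) • ∑ i ∈ Finset.range n,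
        ((2:ℝ) - if i = 0 then 1 else 0) • (Matrix.vecMulVec (w i) (sv i) * θ)) a c
      = 2 * ∑ m ∈ range n, cc m * (w m a * τ (sv m)) := by
    simp only [Matrix.smul_apply, Matrix.sum_apply, Matrix.mul_apply,
      Matrix.vecMulVec_apply, smul_eq_mul, hτdef, Finset.mul_sum]
    refine Finset.sum_congr rfl fun m _ => Finset.sum_congr rfl fun k _ => ?_
    simp only [cc]
    ring
  rw [hRHS]
  calc ∑ m ∈ range n, cc m * (τ (w m) * sv m a + τ (sv m) * w m a)
      = (∑ m ∈ range n, cc m * (τ (w m) * sv m a))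
        + ∑ m ∈ range n, cc m * (τ (sv m) * w m a) := by
        rw [← Finset.sum_add_distrib]
        exact Finset.sum_congr rfl fun m _ => by ring
    _ = (∑ m ∈ range n, cc m * (w m a * τ (sv m)))
        + ∑ m ∈ range n, cc m * (w m a * τ (sv m)) := by
        rw [hGsymm]
        exact congrArg _ (Finset.sum_congr rfl fun m _ => by ring)
    _ = 2 * ∑ m ∈ range n, cc m * (w m a * τ (sv m)) := by ring
end
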